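/- Let F_γ : ℝⁿ → ℝ be convex and differentiable with block coordinate-wise Lipschitz gradient with constants Lᵢ > 0, and for each block i define the coordinate gradient step Tᵢx := x − (1/Lᵢ) Uᵢ Uᵢᵀ∇F_γ(x). Then for all x, y ∈ ℝⁿ: (1/N) ∑_{i=1}^{N} [ (1/2)‖Tᵢx − y‖₁² + F_γ(Tᵢx) ] ≤ (1/2)‖x − y‖₁² + (1 − 1/N) F_γ(x) + (1/N) F_γ(y). -/

import Mathlib

noncomputable section
open scoped RealInnerProductSpace

/-- `blockProj b i x` models `Uᵢ Uᵢᵀ x`: the vector of `ℝⁿ` keeping the coordinates of block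
`i` (as given by the block assignment `b : Fin n → Fin N`) and zeroing the others. -/
def blockProj {n N : ℕ} (b : Fin n → Fin N) (i : Fin N) (x : EuclideanSpace ℝ (Fin n)) :
    EuclideanSpace ℝ (Fin n) :=
  (EuclideanSpace.equiv (Fin n) ℝ).symm (fun j => if b j = i then x j else 0)

/-- The squared weighted norm `‖x‖₁² = ∑ᵢ Lᵢ ‖Uᵢᵀ x‖²`. -/
def wnormSq {n N : ℕ} (b : Fin n → Fin N) (L : Fin N → ℝ)
    (x : EuclideanSpace ℝ (Fin n)) : ℝ :=
  ∑ i : Fin N, L i * ‖blockProj b i x‖ ^ 2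

/-- The coordinate gradient step `Tᵢ x = x − (1/Lᵢ) Uᵢ Uᵢᵀ ∇F_γ(x)`. -/
def coordStep {n N : ℕ} (b : Fin n → Fin N) (L : Fin N → ℝ)
    (Fγ : EuclideanSpace ℝ (Fin n) → ℝ) (i : Fin N) (x : EuclideanSpace ℝ (Fin n)) :
    EuclideanSpace ℝ (Fin n) :=
  x - (1 / L i) • blockProj b i (gradient Fγ x)

section helpers
variable {n N : ℕ} (b : Fin n → Fin N)

lemma blockProj_apply (i : Fin N) (x : EuclideanSpace ℝ (Fin n)) (j : Fin n) :
    blockProj b i x j = if b j = i then x j else 0 := rfl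

lemma blockProj_sub (i : Fin N) (x y : EuclideanSpace ℝ (Fin n)) :
    blockProj b i (x - y) = blockProj b i x - blockProj b i y := by
  ext j; simp [blockProj_apply]; split <;> simp

lemma blockProj_smul (i : Fin N) (c : ℝ) (x : EuclideanSpace ℝ (Fin n)) :
    blockProj b i (c • x) = c • blockProj b i x := by
  ext j; simp only [blockProj_apply, PiLp.smul_apply, smul_eq_mul]; split <;> simp

lemma blockProj_blockProj (i j : Fin N) (x : EuclideanSpace ℝ (Fin n)) :
    blockProj b j (blockProj b i x) = if i = j then blockProj b i x else 0 := by
  ext k; by_cases h : i = j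
  · subst h; simp only [blockProj_apply, if_pos rfl]; split <;> simp_all [blockProj_apply]
  · simp only [blockProj_apply, if_neg h, PiLp.zero_apply]
    split
    · next h' => rw [if_neg (fun h'' => h (h''.symm.trans h'))]
    · rfl

lemma sum_blockProj (x : EuclideanSpace ℝ (Fin n)) :
    ∑ i : Fin N, blockProj b i x = x := by
  ext j
  rw [WithLp.ofLp_sum, Finset.sum_apply]
  simp [blockProj_apply]

lemma inner_blockProj (i : Fin N) (u v : EuclideanSpace ℝ (Fin n)) :
    ⟪blockProj b i u, v⟫ = ⟪blockProj b i u, blockProj b i v⟫ := by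
  simp only [PiLp.inner_apply, blockProj_apply, RCLike.inner_apply, conj_trivial]
  refine Finset.sum_congr rfl fun j _ => ?_
  by_cases h : b j = i <;> simp [h]

lemma inner_blockProj' (i : Fin N) (u v : EuclideanSpace ℝ (Fin n)) :
    ⟪u, blockProj b i v⟫ = ⟪blockProj b i u, blockProj b i v⟫ := by
  simp only [PiLp.inner_apply, blockProj_apply, RCLike.inner_apply, conj_trivial]
  refine Finset.sum_congr rfl fun j _ => ?_
  by_cases h : b j = i <;> simp [h]

lemma myLineDeriv {m : ℕ} (Fγ : EuclideanSpace ℝ (Fin m) → ℝ) (hdiff : Differentiable ℝ Fγ)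
    (p v : EuclideanSpace ℝ (Fin m)) (t : ℝ) :
    HasDerivAt (fun s : ℝ => Fγ (p + s • v)) ⟪gradient Fγ (p + t • v), v⟫ t := by
  have hline : HasDerivAt (fun s : ℝ => p + s • v) v t := by
    simpa using ((hasDerivAt_id t).smul_const v).const_add p
  have hF : HasFDerivAt Fγ
      (InnerProductSpace.toDual ℝ _ (gradient Fγ (p + t • v))) (p + t • v) :=
    (hdiff (p + t • v)).hasGradientAt
  have h := hF.comp_hasDerivAt t hline
  exact h


lemma descent (Fγ : EuclideanSpace ℝ (Fin n) → ℝ) (L : Fin N → ℝ) (hL : ∀ i, 0 < L i)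
    (hdiff : Differentiable ℝ Fγ)
    (hlip : ∀ (x h : EuclideanSpace ℝ (Fin n)) (i : Fin N), blockProj b i h = h →
      ‖blockProj b i (gradient Fγ (x + h) - gradient Fγ x)‖ ≤ L i * ‖h‖)
    (x h : EuclideanSpace ℝ (Fin n)) (i : Fin N) (hh : blockProj b i h = h) :
    Fγ (x + h) ≤ Fγ x + ⟪gradient Fγ x, h⟫ + L i / 2 * ‖h‖ ^ 2 := by
  set ψ : ℝ → ℝ := fun t =>
    Fγ (x + t • h) - t * ⟪gradient Fγ x, h⟫ - L i * t ^ 2 * ‖h‖ ^ 2 / 2 with hψ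
  have hψd : ∀ t, HasDerivAt ψ
      (⟪gradient Fγ (x + t • h), h⟫ - ⟪gradient Fγ x, h⟫ - L i * t * ‖h‖ ^ 2) t := by
    intro t
    have h1 := myLineDeriv Fγ hdiff x h t
    have h2 : HasDerivAt (fun t : ℝ => t * ⟪gradient Fγ x, h⟫) ⟪gradient Fγ x, h⟫ t := by
      simpa using (hasDerivAt_id t).mul_const (⟪gradient Fγ x, h⟫)
    have h3 : HasDerivAt (fun t : ℝ => L i * t ^ 2 * ‖h‖ ^ 2 / 2) (L i * t * ‖h‖ ^ 2) t := by
      have h4 : HasDerivAt (fun t : ℝ => t ^ 2) (2 * t) t := by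
        simpa using hasDerivAt_pow 2 t
      have h5 := h4.const_mul (L i * ‖h‖ ^ 2 / 2)
      have hfun : (fun s : ℝ => L i * ‖h‖ ^ 2 / 2 * s ^ 2)
          = fun s : ℝ => L i * s ^ 2 * ‖h‖ ^ 2 / 2 := by funext s; ring
      have hval : L i * ‖h‖ ^ 2 / 2 * (2 * t) = L i * t * ‖h‖ ^ 2 := by ring
      rw [hfun, hval] at h5
      exact h5
    exact (h1.sub h2).sub h3
  have hdψ : Differentiable ℝ ψ := fun t => (hψd t).differentiableAt
  have hmono : AntitoneOn ψ (Set.Icc 0 1) := by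
    apply antitoneOn_of_deriv_nonpos (convex_Icc 0 1)
    · exact hdψ.continuous.continuousOn
    · exact fun t _ => (hdψ t).differentiableWithinAt
    · intro t ht
      rw [interior_Icc] at ht
      rw [(hψd t).deriv]
      have hbp : blockProj b i (t • h) = t • h := by rw [blockProj_smul, hh]
      have hl := hlip x (t • h) i hbp
      have heq : ⟪gradient Fγ (x + t • h), h⟫ - ⟪gradient Fγ x, h⟫
          = ⟪blockProj b i (gradient Fγ (x + t • h) - gradient Fγ x), h⟫ := by
        rw [← inner_sub_left, ← hh, inner_blockProj' b, ← inner_blockProj b]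
      have hcs := real_inner_le_norm
        (blockProj b i (gradient Fγ (x + t • h) - gradient Fγ x)) h
      have hns : ‖t • h‖ = t * ‖h‖ := by
        rw [norm_smul, Real.norm_eq_abs, abs_of_pos ht.1]
      rw [heq]
      rw [hns] at hl
      have h6 := hcs.trans (mul_le_mul_of_nonneg_right hl (norm_nonneg h))
      have h7 : L i * (t * ‖h‖) * ‖h‖ = L i * t * ‖h‖ ^ 2 := by ring
      linarith
  have h01 := hmono (Set.left_mem_Icc.2 zero_le_one) (Set.right_mem_Icc.2 zero_le_one) zero_le_one
  have h0 : ψ 0 = Fγ x := by simp [hψ]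
  have h1 : ψ 1 = Fγ (x + h) - ⟪gradient Fγ x, h⟫ - L i * ‖h‖ ^ 2 / 2 := by simp [hψ]
  rw [h0, h1] at h01
  linarith

lemma grad_ineq {m : ℕ} (Fγ : EuclideanSpace ℝ (Fin m) → ℝ)
    (hconv : ConvexOn ℝ Set.univ Fγ) (hdiff : Differentiable ℝ Fγ)
    (x y : EuclideanSpace ℝ (Fin m)) :
    Fγ x - Fγ y ≤ ⟪gradient Fγ x, x - y⟫ := by
  set φ : ℝ → ℝ := fun t => Fγ (x + t • (y - x)) with hφ
  have hφconv : ConvexOn ℝ Set.univ φ := by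
    have := hconv.comp_affineMap (AffineMap.lineMap x y)
    rw [Set.preimage_univ] at this
    have hfun : φ = Fγ ∘ AffineMap.lineMap x y := by
      funext t
      simp [hφ, AffineMap.lineMap_apply, add_comm]
    rw [hfun]
    exact this
  have hφd : HasDerivAt φ ⟪gradient Fγ x, y - x⟫ 0 := by
    have := myLineDeriv Fγ hdiff x (y - x) 0
    simpa using this
  have hs := hφconv.le_slope_of_hasDerivAt (Set.mem_univ 0) (Set.mem_univ 1) zero_lt_one hφd
  rw [slope_def_field] at hs
  have h0 : φ 0 = Fγ x := by simp [hφ]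
  have h1 : φ 1 = Fγ y := by simp [hφ]
  rw [h0, h1] at hs
  have hrw : ⟪gradient Fγ x, y - x⟫ = -⟪gradient Fγ x, x - y⟫ := by
    rw [← inner_neg_right, neg_sub]
  rw [hrw] at hs
  simp only [sub_zero, div_one] at hs
  linarith


lemma wnormSq_expand (L : Fin N → ℝ) (hL : ∀ i, 0 < L i) (i : Fin N)
    (u w : EuclideanSpace ℝ (Fin n)) :
    wnormSq b L (u - (1 / L i) • blockProj b i w)
      = wnormSq b L u - 2 * ⟪blockProj b i w, u⟫ + (1 / L i) * ‖blockProj b i w‖ ^ 2 := by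
  set gi := blockProj b i w with hgi
  set c : ℝ := 1 / L i with hc
  have hLc : L i * c = 1 := by rw [hc, mul_one_div, div_self (hL i).ne']
  have hLc2 : L i * c ^ 2 = c := by rw [pow_two, ← mul_assoc, hLc, one_mul]
  have hterm : ∀ j : Fin N, L j * ‖blockProj b j (u - c • gi)‖ ^ 2
      = L j * ‖blockProj b j u‖ ^ 2
        + (if i = j then (-(2 * ⟪gi, u⟫) + c * ‖gi‖ ^ 2) else 0) := by
    intro j
    rw [blockProj_sub, blockProj_smul, blockProj_blockProj]
    by_cases h : i = j
    · subst h
      rw [if_pos rfl, if_pos rfl]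
      rw [norm_sub_sq_real, inner_smul_right, norm_smul, Real.norm_eq_abs, mul_pow, sq_abs]
      have hip : ⟪blockProj b i u, gi⟫ = ⟪gi, u⟫ := by
        rw [hgi, ← inner_blockProj' b, real_inner_comm]
      rw [hip]
      linear_combination (-(2 * ⟪gi, u⟫)) * hLc + ‖gi‖ ^ 2 * hLc2
    · rw [if_neg h, if_neg h]
      simp
  unfold wnormSq
  rw [Finset.sum_congr rfl fun j _ => hterm j, Finset.sum_add_distrib, Finset.sum_ite_eq]
  simp only [Finset.mem_univ, if_pos]
  ring

lemma key_step (Fγ : EuclideanSpace ℝ (Fin n) → ℝ) (L : Fin N → ℝ) (hL : ∀ i, 0 < L i)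
    (hdiff : Differentiable ℝ Fγ)
    (hlip : ∀ (x h : EuclideanSpace ℝ (Fin n)) (i : Fin N), blockProj b i h = h →
      ‖blockProj b i (gradient Fγ (x + h) - gradient Fγ x)‖ ≤ L i * ‖h‖)
    (x y : EuclideanSpace ℝ (Fin n)) (i : Fin N) :
    (1 / 2) * wnormSq b L (coordStep b L Fγ i x - y) + Fγ (coordStep b L Fγ i x)
      ≤ (1 / 2) * wnormSq b L (x - y) + Fγ x - ⟪blockProj b i (gradient Fγ x), x - y⟫ := by
  set gi := blockProj b i (gradient Fγ x) with hgi
  set c : ℝ := 1 / L i with hc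
  have hLc : L i * c = 1 := by rw [hc, mul_one_div, div_self (hL i).ne']
  have hLc2 : L i * c ^ 2 = c := by rw [pow_two, ← mul_assoc, hLc, one_mul]
  have hstep : coordStep b L Fγ i x - y = (x - y) - c • gi := by
    unfold coordStep
    rw [sub_right_comm, hgi, hc]
  have hA : wnormSq b L (coordStep b L Fγ i x - y)
      = wnormSq b L (x - y) - 2 * ⟪gi, x - y⟫ + c * ‖gi‖ ^ 2 := by
    rw [hstep, hgi, hc]
    exact wnormSq_expand b L hL i (x - y) (gradient Fγ x)
  have hB : Fγ (coordStep b L Fγ i x) ≤ Fγ x - c / 2 * ‖gi‖ ^ 2 := by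
    have hh : blockProj b i ((-c) • gi) = (-c) • gi := by
      rw [blockProj_smul, hgi, blockProj_blockProj, if_pos rfl]
    have hd := descent b Fγ L hL hdiff hlip x ((-c) • gi) i hh
    have hx : x + (-c) • gi = coordStep b L Fγ i x := by
      unfold coordStep
      rw [neg_smul, ← sub_eq_add_neg, hgi, hc]
    rw [hx] at hd
    have hip : ⟪gradient Fγ x, (-c) • gi⟫ = -c * ‖gi‖ ^ 2 := by
      rw [inner_smul_right, hgi, inner_blockProj' b, real_inner_self_eq_norm_sq]
    have hnrm : ‖(-c) • gi‖ ^ 2 = c ^ 2 * ‖gi‖ ^ 2 := by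
      rw [norm_smul, Real.norm_eq_abs, mul_pow, sq_abs]
      ring
    rw [hip, hnrm] at hd
    have heq : L i / 2 * (c ^ 2 * ‖gi‖ ^ 2) = c / 2 * ‖gi‖ ^ 2 := by
      linear_combination (‖gi‖ ^ 2 / 2) * hLc2
    linarith
  nlinarith [hA, hB]

end helpers

/-- if `F_γ` is convex and differentiable with block coordinate-wise
Lipschitz gradient (constants `Lᵢ > 0`), then for all `x, y`:
`(1/N) ∑ᵢ [ (1/2)‖Tᵢx − y‖₁² + F_γ(Tᵢx) ] ≤ (1/2)‖x − y‖₁² + (1 − 1/N) F_γ(x) + (1/N) F_γ(y)`. -/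
theorem coordinate_descent_one_step_convex (n N : ℕ) (hN : 0 < N) (b : Fin n → Fin N)
    (Fγ : EuclideanSpace ℝ (Fin n) → ℝ) (L : Fin N → ℝ) (hL : ∀ i, 0 < L i)
    (hconv : ConvexOn ℝ Set.univ Fγ) (hdiff : Differentiable ℝ Fγ)
    (hlip : ∀ (x h : EuclideanSpace ℝ (Fin n)) (i : Fin N), blockProj b i h = h →
      ‖blockProj b i (gradient Fγ (x + h) - gradient Fγ x)‖ ≤ L i * ‖h‖)
    (x y : EuclideanSpace ℝ (Fin n)) :
    (1 / (N : ℝ)) * ∑ i : Fin N,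
        ((1 / 2) * wnormSq b L (coordStep b L Fγ i x - y) + Fγ (coordStep b L Fγ i x))
      ≤ (1 / 2) * wnormSq b L (x - y) + (1 - 1 / (N : ℝ)) * Fγ x + (1 / (N : ℝ)) * Fγ y := by
  have hNR : (0:ℝ) < N := by exact_mod_cast hN
  have hNe : (N:ℝ) ≠ 0 := hNR.ne'
  set A : ℝ := (1 / 2) * wnormSq b L (x - y) + Fγ x with hA
  have hsum : ∑ i : Fin N,
      ((1 / 2) * wnormSq b L (coordStep b L Fγ i x - y) + Fγ (coordStep b L Fγ i x))
      ≤ (N : ℝ) * A - ⟪gradient Fγ x, x - y⟫ := by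
    calc ∑ i : Fin N,
        ((1 / 2) * wnormSq b L (coordStep b L Fγ i x - y) + Fγ (coordStep b L Fγ i x))
        ≤ ∑ i : Fin N, (A - ⟪blockProj b i (gradient Fγ x), x - y⟫) :=
          Finset.sum_le_sum fun i _ => key_step b Fγ L hL hdiff hlip x y i
      _ = (N : ℝ) * A - ⟪gradient Fγ x, x - y⟫ := by
          rw [Finset.sum_sub_distrib, Finset.sum_const, ← sum_inner, sum_blockProj]
          simp [mul_comm]
  have hgrad := grad_ineq Fγ hconv hdiff x y
  have hdivpos : (0:ℝ) ≤ 1 / (N : ℝ) := by positivity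
  calc (1 / (N : ℝ)) * ∑ i : Fin N,
      ((1 / 2) * wnormSq b L (coordStep b L Fγ i x - y) + Fγ (coordStep b L Fγ i x))
      ≤ (1 / (N : ℝ)) * ((N : ℝ) * A - ⟪gradient Fγ x, x - y⟫) :=
        mul_le_mul_of_nonneg_left hsum hdivpos
    _ ≤ (1 / (N : ℝ)) * ((N : ℝ) * A - (Fγ x - Fγ y)) :=
        mul_le_mul_of_nonneg_left (by linarith) hdivpos
    _ = (1 / 2) * wnormSq b L (x - y) + (1 - 1 / (N : ℝ)) * Fγ x + (1 / (N : ℝ)) * Fγ y := by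
        rw [hA]
        field_simp
        ring
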